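/- Let f, g : ℕ → ℝ₊ satisfy: (i) f(r) ≤ 1/2 for all r ∈ {1,...,10}; (ii) g(r) ≤ 1/4 for all r ∈ ℕ; (iii) f(10r) ≤ f(r)² + g(r) for all r ∈ ℕ. If lim_{r→∞} g(r) = 0, then lim_{n→∞} f(10ⁿ r) = 0 for each r ∈ {1,...,10}. -/

import Mathlib

open Filter

/-- let `f, g : ℕ → ℝ₊` satisfy (i) `f(r) ≤ 1/2` for `1 ≤ r ≤ 10`,
(ii) `g(r) ≤ 1/4` for all `r ≥ 1`, (iii) `f(10 r) ≤ f(r)² + g(r)` for all `r ≥ 1`.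
If `g(r) → 0` as `r → ∞`, then `f(10ⁿ r) → 0` as `n → ∞`, for each `r ∈ {1, …, 10}`. -/
theorem stmt9 (f g : ℕ → ℝ)
    (hf0 : ∀ r, 0 ≤ f r) (hg0 : ∀ r, 0 ≤ g r)
    (hf : ∀ r, 1 ≤ r → r ≤ 10 → f r ≤ 1 / 2)
    (hg : ∀ r, 1 ≤ r → g r ≤ 1 / 4)
    (hrec : ∀ r, 1 ≤ r → f (10 * r) ≤ (f r) ^ 2 + g r)
    (hglim : Tendsto g atTop (nhds 0)) :
    ∀ r, 1 ≤ r → r ≤ 10 →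
      Tendsto (fun n : ℕ => f (10 ^ n * r)) atTop (nhds 0) := by
  intro r hr1 hr10
  set a : ℕ → ℝ := fun n => f (10 ^ n * r) with ha
  set b : ℕ → ℝ := fun n => g (10 ^ n * r) with hb
  have hpos : ∀ n : ℕ, 1 ≤ 10 ^ n * r := fun n =>
    le_trans hr1 (Nat.le_mul_of_pos_left r (Nat.pow_pos (n := n) (by norm_num)))
  have hhalf : ∀ n, a n ≤ 1 / 2 := by
    intro n
    induction n with
    | zero => simpa [ha] using hf r hr1 hr10
    | succ n ih =>
      have h := hrec (10 ^ n * r) (hpos n)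
      have hgb := hg (10 ^ n * r) (hpos n)
      have hsq : (a n) ^ 2 ≤ 1 / 4 := by
        have h0 := hf0 (10 ^ n * r)
        nlinarith [ih]
      have : f (10 * (10 ^ n * r)) ≤ 1 / 2 := by linarith
      simpa [ha, pow_succ, mul_comm, mul_assoc, mul_left_comm] using this
  have hstep : ∀ n, a (n + 1) ≤ a n / 2 + b n := by
    intro n
    have h := hrec (10 ^ n * r) (hpos n)
    have h' : f (10 * (10 ^ n * r)) = a (n + 1) := by
      simp [ha, pow_succ, mul_comm, mul_assoc, mul_left_comm]
    have hsq : (a n) ^ 2 ≤ a n / 2 := by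
      have h0 := hf0 (10 ^ n * r)
      nlinarith [hhalf n]
    rw [h'] at h
    linarith
  have hb0 : Tendsto b atTop (nhds 0) := by
    apply hglim.comp
    apply tendsto_atTop_mono (f := fun n : ℕ => 10 ^ n)
    · intro n; exact Nat.le_mul_of_pos_right _ hr1
    · exact tendsto_pow_atTop_atTop_of_one_lt (by norm_num)
  rw [Metric.tendsto_atTop]
  intro ε hε
  obtain ⟨N, hN⟩ := (Metric.tendsto_atTop.mp hb0) (ε / 4) (by linarith)
  have hbN : ∀ n ≥ N, b n ≤ ε / 4 := by
    intro n hn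
    have := hN n hn
    rw [Real.dist_eq, sub_zero, abs_of_nonneg (hg0 _)] at this
    linarith
  have key : ∀ k : ℕ, a (N + k) ≤ (1 / 2 : ℝ) ^ k * (1 / 2) + ε / 2 := by
    intro k
    induction k with
    | zero => simpa using by linarith [hhalf N, hε]
    | succ k ih =>
      have h1 := hstep (N + k)
      have h2 := hbN (N + k) (Nat.le_add_right N k)
      have : a (N + (k + 1)) = a (N + k + 1) := by ring_nf
      rw [this]
      calc a (N + k + 1) ≤ a (N + k) / 2 + b (N + k) := h1
        _ ≤ ((1 / 2 : ℝ) ^ k * (1 / 2) + ε / 2) / 2 + ε / 4 := by linarith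
        _ = (1 / 2 : ℝ) ^ (k + 1) * (1 / 2) + ε / 2 := by ring
  obtain ⟨K, hK⟩ := exists_pow_lt_of_lt_one (show (0:ℝ) < ε / 2 by linarith)
    (show (1 / 2 : ℝ) < 1 by norm_num)
  refine ⟨N + K, fun n hn => ?_⟩
  have hle : a n ≤ (1 / 2 : ℝ) ^ (n - N) * (1 / 2) + ε / 2 := by
    have := key (n - N)
    rwa [Nat.add_sub_cancel' (le_trans (Nat.le_add_right N K) hn)] at this
  have hKn : (1 / 2 : ℝ) ^ (n - N) ≤ (1 / 2 : ℝ) ^ K := by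
    apply pow_le_pow_of_le_one (by norm_num) (by norm_num)
    omega
  rw [Real.dist_eq, sub_zero, abs_of_nonneg (hf0 _)]
  have : a n < ε := by
    calc a n ≤ (1 / 2 : ℝ) ^ (n - N) * (1 / 2) + ε / 2 := hle
      _ ≤ (1 / 2 : ℝ) ^ K * (1 / 2) + ε / 2 := by nlinarith [pow_nonneg (show (0:ℝ) ≤ 1/2 by norm_num) (n - N)]
      _ < ε / 2 + ε / 2 := by nlinarith [pow_nonneg (show (0:ℝ) ≤ 1/2 by norm_num) K]
      _ = ε := by ring
  exact this
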